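/- arXiv:1608.03715 — 2 statements merged into one kernel-verified Lean document; each statement's English description precedes it below -/
import Mathlib

section
/- Fix n and for p ∈ [1,∞) let uⁿ_p be the p-harmonic function on the pre-fractal Vⁿ (minimizer of the discrete p-energy) with uⁿ_p = g on V⁰. Then uⁿ_p converges pointwise on Vⁿ as p → ∞ to the unique absolutely minimizing Lipschitz extension uⁿ ∈ AMLE(Vⁿ) with uⁿ = g on V⁰. -/
open Filter Topology
open scoped Classical

noncomputable section

variable {V : Type*}

/-- A path from `x` to `y` whose interior vertices `l` all lie in `K`. -/
def pathIn (adj : V → V → Prop) (K : Set V) (x y : V) (l : List V) : Prop :=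
  List.Chain adj x (l ++ [y]) ∧ ∀ z ∈ l, z ∈ K

/-- The restricted path metric `d_K` (edge length `δ`), via paths with interior in `K`. -/
def dK (adj : V → V → Prop) (K : Set V) (δ : ℝ) (x y : V) : ℝ :=
  if x = y then 0
  else sInf {r : ℝ | ∃ l : List V, pathIn adj K x y l ∧ r = δ * (l.length + 1)}

/-- The boundary of a vertex set `K`. -/
def bdry (adj : V → V → Prop) (K : Set V) : Set V :=
  {y | y ∉ K ∧ ∃ x ∈ K, adj x y}

/-- The graph infinity Laplacian. -/
def lapInf (adj : V → V → Prop) (u : V → ℝ) (x : V) : ℝ :=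
  sSup ((fun y => u y - u x) '' {y | adj x y}) +
    sInf ((fun y => u y - u x) '' {y | adj x y})

/-- The local Lipschitz constant `F(u,x)` at a vertex `x`. -/
def locLip (adj : V → V → Prop) (δ : ℝ) (u : V → ℝ) (x : V) : ℝ :=
  sSup ((fun y => |u x - u y| / δ) '' {y | adj x y})

/-- The Lipschitz constant of `u` over the set `A`, measured in the metric `d_K`. -/
def LipOn (adj : V → V → Prop) (K A : Set V) (δ : ℝ) (u : V → ℝ) : ℝ :=
  sSup {r : ℝ | ∃ x ∈ A, ∃ y ∈ A, x ≠ y ∧ r = |u x - u y| / dK adj K δ x y}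

/-- `K` is connected: any two points of `K ∪ ∂K` are joined by a path through `K`. -/
def connectedIn (adj : V → V → Prop) (K : Set V) : Prop :=
  ∀ x ∈ K ∪ bdry adj K, ∀ y ∈ K ∪ bdry adj K, x ≠ y → ∃ l, pathIn adj K x y l

/-- Vertices of the initial unit equilateral triangle. -/
def q : Fin 3 → ℝ × ℝ := ![(0, 0), (1, 0), (1/2, Real.sqrt 3 / 2)]

/-- The contraction maps generating the Sierpinski gasket. -/
def psi (i : Fin 3) (x : ℝ × ℝ) : ℝ × ℝ := q i + (2 : ℝ)⁻¹ • (x - q i)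

/-- `ψ_w = ψ_{w₁} ∘ ⋯ ∘ ψ_{wₙ}` for a word `w`. -/
def psiW (w : List (Fin 3)) : ℝ × ℝ → ℝ × ℝ := w.foldr (fun i f => psi i ∘ f) id

def V0 : Set (ℝ × ℝ) := {q 0, q 1, q 2}

/-- The `n`-th pre-fractal vertex set `Vⁿ`. -/
def Vn (n : ℕ) : Set (ℝ × ℝ) := ⋃ w ∈ {w : List (Fin 3) | w.length = n}, psiW w '' V0

/-- Adjacency on `Vⁿ`: `x ~ₙ y` iff `x ≠ y` and the segment `xy` is the image of a side
of the initial triangle under some `ψ_w` with `|w| = n`. -/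
def adjN (n : ℕ) (x y : ℝ × ℝ) : Prop :=
  x ≠ y ∧ ∃ w : List (Fin 3), w.length = n ∧ x ∈ psiW w '' V0 ∧ y ∈ psiW w '' V0

/-- Edge length `δₙ = 2⁻ⁿ`. -/
def deltaN (n : ℕ) : ℝ := (2 : ℝ)⁻¹ ^ n

/-- The discrete `p`-energy on `Vⁿ`. -/
def Ip (n : ℕ) (p : ℝ) (u : ℝ × ℝ → ℝ) : ℝ :=
  (∑' x : Vn n, ∑' y : {y : ℝ × ℝ // adjN n x.1 y}, |(u y.1 - u x.1) / deltaN n| ^ p) ^ (1/p)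

lemma psi_inj (i : Fin 3) : Function.Injective (psi i) := by
  intro a b h
  simp only [psi, add_right_inj] at h
  have := smul_right_injective (ℝ × ℝ) (by norm_num : ((2:ℝ)⁻¹) ≠ 0) h
  exact sub_left_injective this

lemma psiW_nil : psiW [] = id := rfl
lemma psiW_cons (i : Fin 3) (w : List (Fin 3)) : psiW (i :: w) = psi i ∘ psiW w := rfl

lemma psiW_inj (w : List (Fin 3)) : Function.Injective (psiW w) := by
  induction w with
  | nil => exact fun a b h => h
  | cons i w ih => exact (psi_inj i).comp ih

lemma psi_fixed (i : Fin 3) : psi i (q i) = q i := by simp [psi]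

lemma q_ne (i j : Fin 3) (h : i ≠ j) : q i ≠ q j := by
  have h3 : Real.sqrt 3 ≠ 0 := by positivity
  fin_cases i <;> fin_cases j <;> simp_all [q, Prod.ext_iff]

lemma V0_finite : V0.Finite := by
  apply Set.Finite.insert; apply Set.Finite.insert; exact Set.finite_singleton _

lemma Vn_finite (n : ℕ) : (Vn n).Finite := by
  apply Set.Finite.biUnion
  · exact List.finite_length_eq (Fin 3) n
  · intro w _; exact V0_finite.image _

lemma psiW_replicate_fixed (n : ℕ) (i : Fin 3) : psiW (List.replicate n i) (q i) = q i := by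
  induction n with
  | zero => rfl
  | succ n ih => simp [List.replicate_succ, psiW_cons, Function.comp, ih, psi_fixed]

lemma qi_mem_V0 (i : Fin 3) : q i ∈ V0 := by
  fin_cases i <;> simp [V0]

lemma qi_mem_Vn (n : ℕ) (i : Fin 3) : q i ∈ Vn n := by
  apply Set.mem_biUnion (show List.replicate n i ∈ {w : List (Fin 3) | w.length = n} by simp)
  exact ⟨q i, qi_mem_V0 i, psiW_replicate_fixed n i⟩

lemma V0_subset_Vn (n : ℕ) : V0 ⊆ Vn n := by
  intro x hx
  rcases hx with h | h | h <;> subst h <;> exact qi_mem_Vn n _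

lemma adjN_symm {n : ℕ} {x y : ℝ × ℝ} (h : adjN n x y) : adjN n y x := by
  obtain ⟨hne, w, hw, hx, hy⟩ := h
  exact ⟨hne.symm, w, hw, hy, hx⟩

lemma adjN_mem_right {n : ℕ} {x y : ℝ × ℝ} (h : adjN n x y) : y ∈ Vn n := by
  obtain ⟨hne, w, hw, hx, hy⟩ := h
  exact Set.mem_biUnion hw hy

lemma adjN_mem_left {n : ℕ} {x y : ℝ × ℝ} (h : adjN n x y) : x ∈ Vn n := by
  obtain ⟨hne, w, hw, hx, hy⟩ := h
  exact Set.mem_biUnion hw hx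

lemma mem_Vn_iff {n : ℕ} {x : ℝ × ℝ} : x ∈ Vn n ↔ ∃ w : List (Fin 3), w.length = n ∧ x ∈ psiW w '' V0 := by
  simp [Vn]

lemma exists_adjN {n : ℕ} {x : ℝ × ℝ} (hx : x ∈ Vn n) : ∃ y, adjN n x y := by
  obtain ⟨w, hw, a, ha, rfl⟩ := mem_Vn_iff.mp hx
  obtain ⟨b, hb, hab⟩ : ∃ b ∈ V0, b ≠ a := by
    rcases ha with h | h | h
    · exact ⟨q 1, by simp [V0], by rw [h]; exact (q_ne 1 0 (by decide))⟩
    · exact ⟨q 0, by simp [V0], by rw [h]; exact (q_ne 0 1 (by decide))⟩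
    · exact ⟨q 0, by simp [V0], by rw [h]; exact (q_ne 0 2 (by decide))⟩
  exact ⟨psiW w b, fun h => hab (psiW_inj w h.symm), w, hw, ⟨a, ha, rfl⟩, ⟨b, hb, rfl⟩⟩

lemma Vn_succ (n : ℕ) : Vn (n+1) = ⋃ i : Fin 3, psi i '' Vn n := by
  ext x
  simp only [Vn, Set.mem_iUnion, Set.mem_setOf_eq]
  constructor
  · rintro ⟨w, hw, hx⟩
    match w, hw with
    | i :: w', hw => 
      refine ⟨i, ?_⟩
      rw [psiW_cons, Set.image_comp] at hx
      rcases hx with ⟨z, hz, rfl⟩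
      exact ⟨z, mem_Vn_iff.mpr ⟨w', by simpa using hw, hz⟩, rfl⟩
  · rintro ⟨i, z, hz, rfl⟩
    obtain ⟨w', hw', hz'⟩ := mem_Vn_iff.mp hz
    exact ⟨i :: w', by simpa using hw', by rw [psiW_cons, Set.image_comp]; exact ⟨z, hz', rfl⟩⟩

lemma adjN_psi {n : ℕ} {x y : ℝ × ℝ} (i : Fin 3) (h : adjN n x y) :
    adjN (n+1) (psi i x) (psi i y) := by
  obtain ⟨hne, w, hw, hx, hy⟩ := h
  refine ⟨fun hc => hne (psi_inj i hc), i :: w, by simp [hw], ?_, ?_⟩ <;>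
    rw [psiW_cons, Set.image_comp] <;> exact Set.mem_image_of_mem _ ‹_›

lemma psi_comm (i j : Fin 3) : psi i (q j) = psi j (q i) := by
  simp only [psi, smul_sub]; ring_nf
  module

lemma reach_q0 {n : ℕ} : ∀ x ∈ Vn n, Relation.ReflTransGen (adjN n) x (q 0) := by
  induction n with
  | zero =>
    intro x hx
    obtain ⟨w, hw, a, ha, rfl⟩ := mem_Vn_iff.mp hx
    rw [List.length_eq_zero_iff] at hw; subst hw
    simp only [psiW_nil, id] at *
    by_cases h : a = q 0
    · exact h ▸ Relation.ReflTransGen.refl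
    · exact Relation.ReflTransGen.single ⟨h, [], rfl, ⟨a, ha, rfl⟩, ⟨q 0, qi_mem_V0 0, rfl⟩⟩
  | succ n ih =>
    have step : ∀ z ∈ Vn n, ∀ i, Relation.ReflTransGen (adjN (n+1)) (psi i z) (psi i (q 0)) := by
      intro z hz i
      exact Relation.ReflTransGen.lift (psi i) (fun a b h => adjN_psi i h) _ _ (ih z hz)
    intro x hx
    rw [Vn_succ] at hx
    obtain ⟨i, z, hz, rfl⟩ := Set.mem_iUnion.mp hx
    refine (step z hz i).trans ?_
    rw [psi_comm i 0]
    refine (step (q i) (qi_mem_Vn n i) 0).trans ?_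
    rw [psi_fixed]

lemma tsum_set_finite {α : Type*} {S : Set α} (hS : S.Finite) (f : α → ℝ) :
    ∑' x : S, f x.1 = ∑ x ∈ hS.toFinset, f x := by
  haveI := hS.fintype
  rw [tsum_fintype, Finset.sum_subtype hS.toFinset (fun x => hS.mem_toFinset) f]

def VF (n : ℕ) : Finset (ℝ × ℝ) := (Vn_finite n).toFinset

lemma nbr_finite (n : ℕ) (x : ℝ × ℝ) : {y | adjN n x y}.Finite :=
  (Vn_finite n).subset (fun _ hy => adjN_mem_right hy)

def NF (n : ℕ) (x : ℝ × ℝ) : Finset (ℝ × ℝ) := (nbr_finite n x).toFinset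

lemma mem_VF {n : ℕ} {x : ℝ × ℝ} : x ∈ VF n ↔ x ∈ Vn n := (Vn_finite n).mem_toFinset

lemma mem_NF {n : ℕ} {x y : ℝ × ℝ} : y ∈ NF n x ↔ adjN n x y := (nbr_finite n x).mem_toFinset

lemma NF_nonempty {n : ℕ} {x : ℝ × ℝ} (hx : x ∈ Vn n) : (NF n x).Nonempty := by
  obtain ⟨y, hy⟩ := exists_adjN hx
  exact ⟨y, mem_NF.mpr hy⟩

lemma not_mem_NF_self {n : ℕ} {x : ℝ × ℝ} : x ∉ NF n x := by
  rw [mem_NF]; exact fun h => h.1 rfl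

def En (n : ℕ) (p : ℝ) (u : ℝ × ℝ → ℝ) : ℝ :=
  ∑ x ∈ VF n, ∑ y ∈ NF n x, |u y - u x| ^ p

lemma deltaN_pos (n : ℕ) : 0 < deltaN n := by rw [deltaN]; positivity

lemma Ip_eq (n : ℕ) (p : ℝ) (u : ℝ × ℝ → ℝ) :
    Ip n p u = (En n p u / (deltaN n) ^ p) ^ (1/p) := by
  rw [Ip, En]
  congr 1
  rw [tsum_set_finite (Vn_finite n) (fun x => ∑' y : {y : ℝ × ℝ // adjN n x y}, |(u y.1 - u x) / deltaN n| ^ p)]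
  rw [Finset.sum_div]
  apply Finset.sum_congr rfl
  intro x _
  rw [show (∑' y : {y : ℝ × ℝ // adjN n x y}, |(u y.1 - u x) / deltaN n| ^ p)
      = ∑ y ∈ NF n x, |(u y - u x) / deltaN n| ^ p from
    tsum_set_finite (nbr_finite n x) (fun y => |(u y - u x) / deltaN n| ^ p)]
  rw [Finset.sum_div]
  apply Finset.sum_congr rfl
  intro y _
  rw [abs_div, abs_of_pos (deltaN_pos n), Real.div_rpow (abs_nonneg _) (deltaN_pos n).le]

lemma En_nonneg (n : ℕ) (p : ℝ) (u : ℝ × ℝ → ℝ) : 0 ≤ En n p u := by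
  apply Finset.sum_nonneg; intro x _; apply Finset.sum_nonneg; intro y _
  exact Real.rpow_nonneg (abs_nonneg _) p

lemma En_le_of_Ip_le {n : ℕ} {p : ℝ} (hp : 1 ≤ p) {u w : ℝ × ℝ → ℝ}
    (h : Ip n p u ≤ Ip n p w) : En n p u ≤ En n p w := by
  by_contra hc
  push_neg at hc
  have hd : (0:ℝ) < (deltaN n) ^ p := Real.rpow_pos_of_pos (deltaN_pos n) p
  have h2 : En n p w / (deltaN n) ^ p < En n p u / (deltaN n) ^ p :=
    div_lt_div_of_pos_right hc hd
  have h3 : Ip n p w < Ip n p u := by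
    rw [Ip_eq, Ip_eq]
    exact Real.rpow_lt_rpow (div_nonneg (En_nonneg n p w) hd.le) h2
      (by positivity : (0:ℝ) < 1/p)
  exact absurd h (not_le.mpr h3)

def Dp (p s : ℝ) : ℝ := p * s * |s| ^ (p - 2)

lemma Dp_neg (p s : ℝ) : Dp p (-s) = - Dp p s := by
  simp [Dp]

lemma hasDerivAt_abs_rpow' {p : ℝ} (hp : 1 < p) (s : ℝ) :
    HasDerivAt (fun t => |t| ^ p) (Dp p s) s := by
  have := hasDerivAt_abs_rpow s hp
  convert this using 1
  rw [Dp]; ring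

lemma hasDerivAt_A {p : ℝ} (hp : 1 < p) (c t : ℝ) :
    HasDerivAt (fun t => |c - t| ^ p) (-Dp p (c - t)) t := by
  have h1 : HasDerivAt (fun t : ℝ => c - t) (-1) t := (hasDerivAt_id t).const_sub c
  have := (hasDerivAt_abs_rpow' hp (c - t)).comp t h1
  simpa [Function.comp_def] using this

lemma hasDerivAt_B {p : ℝ} (hp : 1 < p) (c t : ℝ) :
    HasDerivAt (fun t => |t + c| ^ p) (Dp p (t + c)) t := by
  have h1 : HasDerivAt (fun t : ℝ => t + c) 1 t := (hasDerivAt_id t).add_const c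
  have := (hasDerivAt_abs_rpow' hp (t + c)).comp t h1
  simpa [Function.comp_def] using this

lemma NF_subset_erase {n : ℕ} (x : ℝ × ℝ) : NF n x ⊆ (VF n).erase x := by
  intro z hz
  have h := mem_NF.mp hz
  exact Finset.mem_erase.mpr ⟨fun hc => h.1 hc.symm, mem_VF.mpr (adjN_mem_right h)⟩

lemma euler_lagrange {n : ℕ} {p : ℝ} (hp : 1 < p) (u : ℝ × ℝ → ℝ) {x : ℝ × ℝ}
    (hx : x ∈ Vn n)
    (hmin : ∀ t : ℝ, En n p u ≤ En n p (fun z => if z = x then u x + t else u z)) :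
    ∑ y ∈ NF n x, Dp p (u y - u x) = 0 := by
  classical
  set w : ℝ → ℝ × ℝ → ℝ := fun t z => if z = x then u x + t else u z with hw
  set der : ℝ × ℝ → ℝ × ℝ → ℝ := fun z y =>
    if z = x then -Dp p (u y - u x) else if y = x then Dp p (u x - u z) else 0 with hder
  have key : HasDerivAt (fun t => En n p (w t))
      (∑ z ∈ VF n, ∑ y ∈ NF n z, der z y) 0 := by
    apply HasDerivAt.fun_sum
    intro z _
    apply HasDerivAt.fun_sum
    intro y hy
    have hyz : y ≠ z := fun h => (mem_NF.mp hy).1 h.symm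
    by_cases hzx : z = x
    · have hyx : y ≠ x := hzx ▸ hyz
      have heq : (fun t => |w t y - w t z| ^ p) = fun t => |(u y - u x) - t| ^ p := by
        funext t
        simp only [hw, hzx, if_pos rfl, if_neg hyx]
        ring_nf
      rw [heq]
      simp only [hder, if_pos hzx, hzx]
      have := hasDerivAt_A hp (u y - u x) 0
      simpa using this
    · by_cases hyx : y = x
      · have heq : (fun t => |w t y - w t z| ^ p) = fun t => |t + (u x - u z)| ^ p := by
          funext t
          simp only [hw, hyx, if_pos rfl, if_neg hzx]
          ring_nf
        rw [heq]
        simp only [hder, if_neg hzx, if_pos hyx]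
        have := hasDerivAt_B hp (u x - u z) 0
        simpa using this
      · have heq : (fun t => |w t y - w t z| ^ p) = fun _ => |u y - u z| ^ p := by
          funext t
          simp only [hw, if_neg hyx, if_neg hzx]
        rw [heq]
        simp only [hder, if_neg hzx, if_neg hyx]
        exact hasDerivAt_const 0 _
  have hw0 : w 0 = u := by
    funext z
    by_cases h : z = x <;> simp [hw, h]
  have hmin0 : IsLocalMin (fun t => En n p (w t)) 0 := by
    apply Filter.Eventually.of_forall
    intro t
    show En n p (w 0) ≤ En n p (w t)
    rw [hw0]
    exact hmin t
  have hzero := hmin0.hasDerivAt_eq_zero key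
  have hsum : ∑ z ∈ VF n, ∑ y ∈ NF n z, der z y
      = -2 * ∑ y ∈ NF n x, Dp p (u y - u x) := by
    have hxVF : x ∈ VF n := mem_VF.mpr hx
    rw [← Finset.add_sum_erase _ _ hxVF]
    have h1 : ∑ y ∈ NF n x, der x y = -∑ y ∈ NF n x, Dp p (u y - u x) := by
      rw [← Finset.sum_neg_distrib]
      apply Finset.sum_congr rfl
      intro y _
      simp [hder]
    have h2 : ∑ z ∈ (VF n).erase x, ∑ y ∈ NF n z, der z y
        = -∑ y ∈ NF n x, Dp p (u y - u x) := by
      have hz1 : ∀ z ∈ (VF n).erase x, ∑ y ∈ NF n z, der z y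
          = if z ∈ NF n x then -Dp p (u z - u x) else 0 := by
        intro z hz
        have hzx : z ≠ x := Finset.ne_of_mem_erase hz
        have : ∀ y ∈ NF n z, der z y = if y = x then Dp p (u x - u z) else 0 := by
          intro y _
          simp only [hder, if_neg hzx]
        rw [Finset.sum_congr rfl this, Finset.sum_ite_eq' (NF n z) x (fun _ => Dp p (u x - u z))]
        have hmem : x ∈ NF n z ↔ z ∈ NF n x := by
          rw [mem_NF, mem_NF]
          exact ⟨adjN_symm, adjN_symm⟩
        have hDpo : Dp p (u x - u z) = -Dp p (u z - u x) := by
          rw [← neg_sub, Dp_neg]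
        by_cases hm : z ∈ NF n x
        · rw [if_pos (hmem.mpr hm), if_pos hm, hDpo]
        · rw [if_neg (fun hc => hm (hmem.mp hc)), if_neg hm]
      rw [Finset.sum_congr rfl hz1, Finset.sum_ite_mem,
        Finset.inter_eq_right.mpr (NF_subset_erase x), ← Finset.sum_neg_distrib]
    rw [h1, h2]; ring
  rw [hsum] at hzero
  linarith

lemma el_limit {α : Type*} {s : Finset α} (d : α → ℝ) (a : ℕ → α → ℝ) (e : ℕ → ℝ)
    (he : Filter.Tendsto e Filter.atTop Filter.atTop)
    (ha : ∀ y ∈ s, Filter.Tendsto (fun k => a k y) Filter.atTop (𝓝 (d y)))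
    (heq : ∀ k, ∑ y ∈ s, a k y * |a k y| ^ (e k) = 0)
    {A B : ℝ} (hA : ∀ y ∈ s, d y ≤ A) (hA' : ∃ y ∈ s, d y = A) (hB : ∀ y ∈ s, B ≤ d y) :
    A + B ≤ 0 := by
  classical
  by_contra hc
  push_neg at hc
  set ε := (A + B) / 2 with hε
  clear_value ε
  have hε0 : 0 < ε := by simp only [hε]; linarith
  obtain ⟨yp, hyp, hypA⟩ := hA'
  have hAB : B ≤ A := le_trans (hB yp hyp) (le_of_eq hypA)
  have hAε : ε ≤ A := by simp only [hε]; linarith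
  set R := A + 1 with hR
  clear_value R
  have hR0 : 0 < R := by linarith
  set c := (3 * ε / 2) / R with hcdef
  clear_value c
  have hc0 : 0 < c := by rw [hcdef]; positivity
  set N : ℝ := (s.card : ℝ) with hN
  clear_value N
  have hN0 : 0 ≤ N := by rw [hN]; positivity
  have hev1 : ∀ᶠ k in Filter.atTop, ∀ y ∈ s, |a k y - d y| ≤ ε / 4 := by
    rw [Filter.eventually_all_finset]
    intro y hy
    have h2 : Filter.Tendsto (fun k => |a k y - d y|) Filter.atTop (𝓝 0) := by
      have := ((ha y hy).sub_const (d y)).abs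
      simpa using this
    exact h2.eventually_le_const (by positivity)
  have hev2 : ∀ᶠ k in Filter.atTop, 1 ≤ e k + 1 ∧ N < 1 + c * (e k + 1) := by
    have h1 : Filter.Tendsto (fun k => e k + 1) Filter.atTop Filter.atTop :=
      Filter.tendsto_atTop_add_const_right _ 1 he
    filter_upwards [h1.eventually_ge_atTop 1, h1.eventually_ge_atTop ((N + 1)/c)] with k hk1 hk2
    refine ⟨hk1, ?_⟩
    have : c * ((N+1)/c) ≤ c * (e k + 1) := mul_le_mul_of_nonneg_left hk2 hc0.le
    rw [mul_div_cancel₀ _ (ne_of_gt hc0)] at this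
    linarith
  obtain ⟨k, hk1, hq1, hqN⟩ := (hev1.and hev2).exists
  set q' := e k + 1 with hq'
  clear_value q'
  have hek : 0 ≤ e k := by linarith
  have hap : A - ε/4 ≤ a k yp := by
    have h := abs_le.mp (hk1 yp hyp)
    rw [hypA] at h
    linarith [h.1]
  have hap0 : 0 < a k yp := by linarith
  set m := A - 7 * ε / 4 with hm
  clear_value m
  have hneg : ∀ y ∈ s, ¬ (0 ≤ a k y) → |a k y| ≤ m := by
    intro y hy hay
    push_neg at hay
    have h1 := (abs_le.mp (hk1 y hy)).1
    have h2 := hB y hy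
    rw [abs_of_neg hay]
    have hBA : -B = A - 2 * (ε) := by rw [hε]; ring
    linarith
  set t : α → ℝ := fun y => a k y * |a k y| ^ (e k) with ht
  have e0 := heq k
  rw [← Finset.sum_filter_add_sum_filter_not s (fun y => 0 ≤ a k y)] at e0
  set P := s.filter (fun y => 0 ≤ a k y) with hP
  set Ng := s.filter (fun y => ¬ 0 ≤ a k y) with hNg
  have hAq : 0 < A - ε/4 := by linarith
  have hq'0 : 0 < q' := by linarith
  have hpos : (A - ε/4) ^ q' ≤ ∑ y ∈ P, a k y * |a k y| ^ (e k) := by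
    have hypP : yp ∈ P := Finset.mem_filter.mpr ⟨hyp, hap0.le⟩
    have hterm : (A - ε/4) ^ q' ≤ a k yp * |a k yp| ^ (e k) := by
      rw [abs_of_pos hap0, mul_comm, ← Real.rpow_add_one (ne_of_gt hap0) (e k), ← hq']
      exact Real.rpow_le_rpow hAq.le hap hq'0.le
    refine le_trans hterm (Finset.single_le_sum (f := fun y => a k y * |a k y| ^ (e k))
      (fun y hyP => ?_) hypP)
    have h0 := (Finset.mem_filter.mp hyP).2
    positivity
  have hposq : 0 < (A - ε/4) ^ q' := Real.rpow_pos_of_pos hAq q'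
  by_cases hNe : Ng.Nonempty
  · have hm0 : 0 ≤ m := by
      obtain ⟨y0, hy0⟩ := hNe
      exact le_trans (abs_nonneg _)
        (hneg y0 (Finset.mem_filter.mp hy0).1 (Finset.mem_filter.mp hy0).2)
    have hbound : ∀ y ∈ Ng, -(m ^ q') ≤ a k y * |a k y| ^ (e k) := by
      intro y hy
      obtain ⟨hys, hya'⟩ := Finset.mem_filter.mp hy
      have hya : a k y < 0 := not_le.mp hya'
      have habs : |a k y| ≤ m := hneg y hys hya'
      have h1 : a k y * |a k y| ^ (e k) = -(|a k y| ^ q') := by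
        rw [hq', Real.rpow_add_one (abs_ne_zero.mpr (ne_of_lt hya)) (e k),
          abs_of_neg hya]
        ring
      rw [h1, neg_le_neg_iff]
      exact Real.rpow_le_rpow (abs_nonneg _) habs hq'0.le
    have hnegsum : -(N * m ^ q') ≤ ∑ y ∈ Ng, a k y * |a k y| ^ (e k) := by
      calc -(N * m ^ q') ≤ -((Ng.card : ℝ) * m ^ q') := by
            have hcard : (Ng.card : ℝ) ≤ N := by
              rw [hN]
              exact_mod_cast Finset.card_le_card (Finset.filter_subset _ s)
            have hmq : 0 ≤ m ^ q' := Real.rpow_nonneg hm0 q'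
            nlinarith
        _ ≤ ∑ y ∈ Ng, a k y * |a k y| ^ (e k) := by
            have := Finset.card_nsmul_le_sum Ng (fun y => a k y * |a k y| ^ (e k))
              (-(m ^ q')) hbound
            simpa [nsmul_eq_mul, mul_comm, mul_neg] using this
    have hfinal : (A - ε/4) ^ q' ≤ N * m ^ q' := by
      have : ∑ y ∈ P, a k y * |a k y| ^ (e k) ≤ N * m ^ q' := by linarith
      linarith
    rcases eq_or_lt_of_le hm0 with hm1 | hm1
    · rw [← hm1, Real.zero_rpow (ne_of_gt hq'0), mul_zero] at hfinal
      linarith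
    · have hmR : m ≤ R := by linarith
      have hstep : (1 + c) * m ≤ A - ε/4 := by
        have hcm : c * m ≤ c * R := mul_le_mul_of_nonneg_left hmR hc0.le
        have hcR : c * R = 3 * ε / 2 := by
          rw [hcdef, div_mul_cancel₀ _ (ne_of_gt hR0)]
        nlinarith
      have h2 : (1 + c) ^ q' * m ^ q' ≤ N * m ^ q' := by
        rw [← Real.mul_rpow (by linarith) hm0]
        · exact le_trans (Real.rpow_le_rpow (by positivity) hstep hq'0.le) hfinal
      have h3 : (1 + c) ^ q' ≤ N := by
        have hmq : 0 < m ^ q' := Real.rpow_pos_of_pos hm1 q'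
        exact le_of_mul_le_mul_right h2 hmq
      have h4 : 1 + q' * c ≤ (1 + c) ^ q' :=
        one_add_mul_self_le_rpow_one_add (by linarith) hq1
      nlinarith
  · rw [Finset.not_nonempty_iff_eq_empty] at hNe
    rw [hNe, Finset.sum_empty, add_zero] at e0
    rw [e0] at hpos
    linarith

lemma NF_subset_VF {n : ℕ} (x : ℝ × ℝ) : NF n x ⊆ VF n := fun z hz =>
  mem_VF.mpr (adjN_mem_right (mem_NF.mp hz))

lemma image_nonempty {n : ℕ} {x : ℝ × ℝ} (hx : x ∈ Vn n) (u : ℝ × ℝ → ℝ) :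
    ((NF n x).image (fun y => u y - u x)).Nonempty :=
  (NF_nonempty hx).image _

lemma lapInf_eq_max_min {n : ℕ} (u : ℝ × ℝ → ℝ) {x : ℝ × ℝ} (hx : x ∈ Vn n) :
    lapInf (adjN n) u x =
      ((NF n x).image (fun y => u y - u x)).max' (image_nonempty hx u) +
      ((NF n x).image (fun y => u y - u x)).min' (image_nonempty hx u) := by
  have hset : {y | adjN n x y} = ↑(NF n x) := ((nbr_finite n x).coe_toFinset).symm
  rw [lapInf, hset, ← Finset.coe_image,
    Finset.Nonempty.csSup_eq_max' (image_nonempty hx u),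
    Finset.Nonempty.csInf_eq_min' (image_nonempty hx u)]

lemma harm_facts {n : ℕ} {u : ℝ × ℝ → ℝ} {x : ℝ × ℝ} (hx : x ∈ Vn n)
    (h0 : lapInf (adjN n) u x = 0) :
    ∃ a : ℝ, 0 ≤ a ∧ (∀ y ∈ NF n x, u y - u x ≤ a ∧ -a ≤ u y - u x) ∧
      (∃ y ∈ NF n x, u y - u x = a) ∧ (∃ y ∈ NF n x, u y - u x = -a) := by
  classical
  set img := (NF n x).image (fun y => u y - u x) with himg
  have hne : img.Nonempty := image_nonempty hx u
  set a := img.max' hne with ha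
  have hminmax := lapInf_eq_max_min u hx (n := n)
  rw [h0] at hminmax
  have hmin : img.min' hne = -a := by rw [ha]; linarith [hminmax]
  have hle : img.min' hne ≤ img.max' hne := Finset.min'_le _ _ (Finset.max'_mem _ _)
  refine ⟨a, by rw [ha] at hmin ⊢; linarith, ?_, ?_, ?_⟩
  · intro y hy
    have hmem : u y - u x ∈ img := Finset.mem_image_of_mem _ hy
    exact ⟨Finset.le_max' _ _ hmem, hmin ▸ Finset.min'_le _ _ hmem⟩
  · obtain ⟨y, hy, hval⟩ := Finset.mem_image.mp (Finset.max'_mem img hne)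
    exact ⟨y, hy, hval⟩
  · obtain ⟨y, hy, hval⟩ := Finset.mem_image.mp (hmin ▸ Finset.min'_mem img hne)
    exact ⟨y, hy, hval⟩

lemma amle_le {n : ℕ} {u v : ℝ × ℝ → ℝ}
    (hu : ∀ x ∈ Vn n \ V0, lapInf (adjN n) u x = 0)
    (hv : ∀ x ∈ Vn n \ V0, lapInf (adjN n) v x = 0)
    (hb : ∀ x ∈ V0, u x = v x) : ∀ x ∈ Vn n, u x ≤ v x := by
  classical
  by_contra hcon
  push_neg at hcon
  obtain ⟨x0, hx0, hx0gt⟩ := hcon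
  set φ : ℝ × ℝ → ℝ := fun z => u z - v z with hφ
  have hVFne : (VF n).Nonempty := ⟨x0, mem_VF.mpr hx0⟩
  obtain ⟨b, hbVF, hbmax⟩ := Finset.exists_max_image (VF n) φ hVFne
  set M := φ b with hM
  have hM0 : 0 < M := lt_of_lt_of_le (by simp [hφ]; linarith) (hbmax x0 (mem_VF.mpr hx0))
  set T := (VF n).filter (fun z => φ z = M) with hT
  have hTne : T.Nonempty := ⟨b, Finset.mem_filter.mpr ⟨hbVF, rfl⟩⟩
  obtain ⟨x, hxT, hxmin⟩ := Finset.exists_min_image T u hTne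
  have hTnotV0 : ∀ z ∈ T, z ∉ V0 := by
    intro z hz hzV0
    have := (Finset.mem_filter.mp hz).2
    simp only [hφ] at this
    have h0 : u z = v z := hb z hzV0
    simp only [h0, sub_self] at this
    linarith [this ▸ hM0]
  have hTVn : ∀ z ∈ T, z ∈ Vn n := fun z hz => mem_VF.mp (Finset.mem_filter.mp hz).1
  -- propagation
  have prop : ∀ z, z ∈ T → u z = u x → ∀ y ∈ NF n z, y ∈ T ∧ u y = u x := by
    intro z hzT hzu
    have hzVn : z ∈ Vn n := hTVn z hzT
    have hzint : z ∈ Vn n \ V0 := ⟨hzVn, hTnotV0 z hzT⟩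
    obtain ⟨a, ha0, habd, ⟨y1, hy1, hy1a⟩, _⟩ := harm_facts hzVn (hu z hzint)
    obtain ⟨a', ha'0, ha'bd, _, ⟨y3, hy3, hy3a⟩⟩ := harm_facts hzVn (hv z hzint)
    have hφz : φ z = M := (Finset.mem_filter.mp hzT).2
    have hφle : ∀ y ∈ NF n z, φ y ≤ M := fun y hy =>
      hbmax y (NF_subset_VF z (hy : y ∈ NF n z))
    -- v y1 - v z ≥ a
    have h1 : a ≤ v y1 - v z := by
      have := hφle y1 hy1
      simp only [hφ] at this hφz
      linarith [hy1a]
    have haa' : a ≤ a' := le_trans h1 (ha'bd y1 hy1).1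
    -- y3 : v y3 - v z = -a'
    have h2 : M ≤ φ y3 := by
      have hu3 := (habd y3 hy3).2
      simp only [hφ] at hφz ⊢
      linarith [hy3a]
    have hy3M : φ y3 = M := le_antisymm (hφle y3 hy3) h2
    have hy3T : y3 ∈ T := Finset.mem_filter.mpr ⟨NF_subset_VF z hy3, hy3M⟩
    -- u y3 = u z - a'
    have hu3 : u y3 = u z - a' := by
      simp only [hφ] at hy3M hφz
      linarith [hy3a]
    -- minimality of u x on T forces a' = 0
    have ha'0' : a' = 0 := by
      have := hxmin y3 hy3T
      rw [hu3, hzu] at this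
      linarith
    have ha0' : a = 0 := by linarith
    -- all neighbors have same u and v values
    intro y hy
    have huy : u y = u z := by
      have := habd y hy
      rw [ha0'] at this
      linarith [this.1, this.2]
    have hvy : v y ≥ v z := by
      have := hφle y hy
      simp only [hφ] at this hφz
      linarith [huy]
    have hvy' : v y = v z := by
      have := (ha'bd y hy).1
      rw [ha'0'] at this
      linarith
    have hφy : φ y = M := by
      simp only [hφ] at hφz ⊢
      rw [huy, hvy']
      exact hφz
    exact ⟨Finset.mem_filter.mpr ⟨NF_subset_VF z hy, hφy⟩, by rw [huy, hzu]⟩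
  -- reach a boundary point
  have hreach := reach_q0 x (hTVn x hxT)
  have hq0T : q 0 ∈ T := by
    have key : ∀ z, Relation.ReflTransGen (adjN n) z (q 0) → z ∈ T ∧ u z = u x → q 0 ∈ T := by
      intro z hz
      induction hz using Relation.ReflTransGen.head_induction_on with
      | refl => exact fun h => h.1
      | head h h' ih =>
        intro hzT
        exact ih (prop _ hzT.1 hzT.2 _ (mem_NF.mpr h))
    exact key x hreach ⟨hxT, rfl⟩
  exact hTnotV0 (q 0) hq0T (qi_mem_V0 0)

lemma bound_of_reach {n : ℕ} {x : ℝ × ℝ} (h : Relation.ReflTransGen (adjN n) x (q 0)) :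
    ∃ k : ℕ, ∀ (u : ℝ × ℝ → ℝ) (C : ℝ), 0 ≤ C → (∀ a b, adjN n a b → |u b - u a| ≤ C) →
      |u x| ≤ |u (q 0)| + k * C := by
  induction h using Relation.ReflTransGen.head_induction_on with
  | refl => exact ⟨0, fun u C hC hedge => by simp⟩
  | @head a c hadj htail ih =>
    obtain ⟨k, hk⟩ := ih
    refine ⟨k + 1, fun u C hC hedge => ?_⟩
    have h1 : |u a| ≤ |u c| + |u c - u a| := by
      have := abs_sub_abs_le_abs_sub (u a) (u c)
      have h2 := abs_sub_comm (u a) (u c)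
      linarith [abs_sub_abs_le_abs_sub (u a) (u c), (abs_sub_comm (u a) (u c)).le]
    have h2 := hedge a c hadj
    have h3 := hk u C hC hedge
    push_cast
    linarith

lemma edge_bound {n : ℕ} {p : ℝ} (hp : 1 ≤ p) {u w0 : ℝ × ℝ → ℝ}
    (hE : En n p u ≤ En n p w0) {M : ℝ} (hM : 1 ≤ M)
    (hw0 : ∀ y z : ℝ × ℝ, |w0 y - w0 z| ≤ M) {x y : ℝ × ℝ} (hadj : adjN n x y) :
    |u y - u x| ≤ ((VF n).card : ℝ) * ((VF n).card : ℝ) * M := by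
  have hp0 : 0 < p := by linarith
  set K : ℝ := ((VF n).card : ℝ) with hK
  have hK1 : 1 ≤ K := by
    rw [hK]
    exact_mod_cast Finset.card_pos.mpr ⟨q 0, mem_VF.mpr (qi_mem_Vn n 0)⟩
  have hMp0 : 0 ≤ M ^ p := Real.rpow_nonneg (by linarith) p
  -- single term ≤ En u
  have hsingle : |u y - u x| ^ p ≤ En n p u := by
    have hxVF : x ∈ VF n := mem_VF.mpr (adjN_mem_left hadj)
    have hyNF : y ∈ NF n x := mem_NF.mpr hadj
    have hinner : |u y - u x| ^ p ≤ ∑ y' ∈ NF n x, |u y' - u x| ^ p :=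
      Finset.single_le_sum (f := fun y' => |u y' - u x| ^ p)
        (fun i _ => Real.rpow_nonneg (abs_nonneg _) p) hyNF
    refine le_trans hinner (Finset.single_le_sum
      (f := fun x' => ∑ y' ∈ NF n x', |u y' - u x'| ^ p) (fun i _ => ?_) hxVF)
    exact Finset.sum_nonneg fun j _ => Real.rpow_nonneg (abs_nonneg _) p
  -- En w0 ≤ K * K * M^p
  have hEw : En n p w0 ≤ K * (K * M ^ p) := by
    rw [En]
    calc ∑ x' ∈ VF n, ∑ y' ∈ NF n x', |w0 y' - w0 x'| ^ p
        ≤ ∑ x' ∈ VF n, (K * M ^ p) := by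
          apply Finset.sum_le_sum
          intro x' _
          calc ∑ y' ∈ NF n x', |w0 y' - w0 x'| ^ p
              ≤ ∑ y' ∈ NF n x', M ^ p := Finset.sum_le_sum fun y' _ =>
                Real.rpow_le_rpow (abs_nonneg _) (hw0 y' x') hp0.le
            _ = ((NF n x').card : ℝ) * M ^ p := by rw [Finset.sum_const, nsmul_eq_mul]
            _ ≤ K * M ^ p := by
                apply mul_le_mul_of_nonneg_right _ hMp0
                rw [hK]
                exact_mod_cast Finset.card_le_card (NF_subset_VF x')
      _ = K * (K * M ^ p) := by rw [Finset.sum_const, nsmul_eq_mul, hK]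
  have htot : |u y - u x| ^ p ≤ (K * K) * M ^ p := by
    calc |u y - u x| ^ p ≤ En n p u := hsingle
      _ ≤ En n p w0 := hE
      _ ≤ K * (K * M ^ p) := hEw
      _ = (K * K) * M ^ p := by ring
  -- take p-th roots
  have h1 : (|u y - u x| ^ p) ^ (1/p) ≤ ((K * K) * M ^ p) ^ (1/p) :=
    Real.rpow_le_rpow (Real.rpow_nonneg (abs_nonneg _) p) htot (by positivity)
  have h2 : (|u y - u x| ^ p) ^ (1/p) = |u y - u x| := by
    rw [← Real.rpow_mul (abs_nonneg _), mul_one_div_cancel (ne_of_gt hp0), Real.rpow_one]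
  have h3 : ((K * K) * M ^ p) ^ (1/p) = (K * K) ^ (1/p) * M := by
    rw [Real.mul_rpow (by nlinarith) hMp0, ← Real.rpow_mul (by linarith : (0:ℝ) ≤ M),
      mul_one_div_cancel (ne_of_gt hp0), Real.rpow_one]
  have h4 : (K * K) ^ (1/p) ≤ K * K := by
    calc (K * K) ^ (1/p) ≤ (K * K) ^ (1:ℝ) :=
        Real.rpow_le_rpow_of_exponent_le (by nlinarith) (by
          rw [div_le_one hp0]; linarith)
      _ = K * K := Real.rpow_one _
  rw [h2, h3] at h1
  calc |u y - u x| ≤ (K * K) ^ (1/p) * M := h1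
    _ ≤ K * K * M := mul_le_mul_of_nonneg_right h4 (by linarith)

/-- The `p`-harmonic functions on `Vⁿ` converge, as `p → ∞`, to the unique
infinity harmonic function (the AMLE) with boundary data `g`. -/
theorem stmt18 (n : ℕ) (g : ℝ × ℝ → ℝ) (up : ℝ → ℝ × ℝ → ℝ)
    (hup : ∀ p : ℝ, 1 ≤ p → (∀ x ∈ V0, up p x = g x) ∧
      ∀ w : ℝ × ℝ → ℝ, (∀ x ∈ V0, w x = g x) → Ip n p (up p) ≤ Ip n p w)
    (un : ℝ × ℝ → ℝ) (hunb : ∀ x ∈ V0, un x = g x)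
    (hun : ∀ x ∈ Vn n \ V0, lapInf (adjN n) un x = 0) :
    ∀ x ∈ Vn n, Filter.Tendsto (fun p => up p x) Filter.atTop (nhds (un x)) := by
  classical
  have hbd : ∀ p : ℝ, 1 ≤ p → ∀ z ∈ V0, up p z = g z := fun p hp => (hup p hp).1
  set G := |g (q 0)| + |g (q 1)| + |g (q 2)| with hG
  have hG0 : 0 ≤ G := by rw [hG]; positivity
  set w0 : ℝ × ℝ → ℝ := fun z => if z ∈ V0 then g z else 0 with hw0
  have hw0b : ∀ z ∈ V0, w0 z = g z := fun z hz => by simp only [hw0, if_pos hz]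
  set M := 2 * G + 1 with hM
  have hM1 : 1 ≤ M := by linarith
  have hw0val : ∀ z, |w0 z| ≤ G := by
    intro z
    by_cases hz : z ∈ V0
    · simp only [hw0, if_pos hz]
      rcases hz with h | h | h <;> rw [h] <;>
        [linarith [abs_nonneg (g (q 1)), abs_nonneg (g (q 2))];
         linarith [abs_nonneg (g (q 0)), abs_nonneg (g (q 2))];
         linarith [abs_nonneg (g (q 0)), abs_nonneg (g (q 1))]]
    · simp only [hw0, if_neg hz, abs_zero]; exact hG0
  have hw0diff : ∀ a b : ℝ × ℝ, |w0 a - w0 b| ≤ M := by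
    intro a b
    calc |w0 a - w0 b| ≤ |w0 a| + |w0 b| := abs_sub _ _
      _ ≤ G + G := add_le_add (hw0val a) (hw0val b)
      _ ≤ M := by linarith
  set C := ((VF n).card : ℝ) * ((VF n).card : ℝ) * M with hC
  have hC0 : 0 ≤ C := by
    have : (0:ℝ) ≤ ((VF n).card : ℝ) := by positivity
    nlinarith
  have hedge : ∀ p : ℝ, 1 ≤ p → ∀ a b, adjN n a b → |up p b - up p a| ≤ C := by
    intro p hp a b hadj
    exact edge_bound hp (En_le_of_Ip_le hp ((hup p hp).2 w0 hw0b)) hM1 hw0diff hadj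
  have hpt : ∀ z ∈ VF n, ∃ B : ℝ, ∀ p : ℝ, 1 ≤ p → |up p z| ≤ B := by
    intro z hz
    obtain ⟨k, hk⟩ := bound_of_reach (reach_q0 z (mem_VF.mp hz))
    refine ⟨|g (q 0)| + k * C, fun p hp => ?_⟩
    have h := hk (up p) C hC0 (hedge p hp)
    rwa [hbd p hp (q 0) (qi_mem_V0 0)] at h
  choose! B hB using hpt
  have hVFne : (VF n).Nonempty := ⟨q 0, mem_VF.mpr (qi_mem_Vn n 0)⟩
  set R := max ((VF n).sup' hVFne B) 0 with hR
  have hRbound : ∀ z ∈ VF n, ∀ p : ℝ, 1 ≤ p → |up p z| ≤ R := fun z hz p hp =>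
    le_trans (hB z hz p hp) (le_max_of_le_left (Finset.le_sup' B hz))
  have hR0 : 0 ≤ R := le_max_right _ _
  intro x hx
  apply Filter.tendsto_of_subseq_tendsto
  intro ns hns
  obtain ⟨K0, hK0⟩ := Filter.eventually_atTop.mp (hns.eventually_ge_atTop 2)
  set pk : ℕ → ℝ := fun k => ns (k + K0) with hpk
  have hpk2 : ∀ k, 2 ≤ pk k := fun k => hK0 (k + K0) (Nat.le_add_left _ _)
  have hpk1 : ∀ k, 1 ≤ pk k := fun k => by linarith [hpk2 k]
  have hpkT : Filter.Tendsto pk Filter.atTop Filter.atTop :=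
    hns.comp (tendsto_add_atTop_nat K0)
  set v : ℕ → (↥(VF n) → ℝ) := fun k z => up (pk k) z.1 with hv
  have hmem : ∀ k, v k ∈ Metric.closedBall (0 : ↥(VF n) → ℝ) R := by
    intro k
    rw [Metric.mem_closedBall, dist_zero_right, pi_norm_le_iff_of_nonneg hR0]
    intro z
    rw [Real.norm_eq_abs]
    exact hRbound z.1 z.2 (pk k) (hpk1 k)
  obtain ⟨F, hFmem, ms, hms, hFconv⟩ :=
    (isCompact_closedBall (0 : ↥(VF n) → ℝ) R).tendsto_subseq hmem
  set uoo : ℝ × ℝ → ℝ := fun z => if h : z ∈ VF n then F ⟨z, h⟩ else 0 with huoo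
  have hVnVF : ∀ z, z ∈ Vn n → z ∈ VF n := fun z hz => mem_VF.mpr hz
  have hptconv : ∀ z, ∀ hz : z ∈ VF n,
      Filter.Tendsto (fun k => up (pk (ms k)) z) Filter.atTop (𝓝 (uoo z)) := by
    intro z hz
    have h := (tendsto_pi_nhds.mp hFconv) ⟨z, hz⟩
    simp only [huoo, dif_pos hz]
    exact h
  have hbduoo : ∀ z ∈ V0, uoo z = g z := by
    intro z hz
    have h1 : Filter.Tendsto (fun k => up (pk (ms k)) z) Filter.atTop (𝓝 (g z)) := by
      have heq : (fun k => up (pk (ms k)) z) = fun _ => g z :=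
        funext fun k => hbd _ (hpk1 _) z hz
      rw [heq]; exact tendsto_const_nhds
    exact tendsto_nhds_unique (hptconv z (hVnVF z (V0_subset_Vn n hz))) h1
  have hharm : ∀ z ∈ Vn n \ V0, lapInf (adjN n) uoo z = 0 := by
    intro z hz
    obtain ⟨hzVn, hzV0⟩ := hz
    have hEL : ∀ k, ∑ y ∈ NF n z, (up (pk (ms k)) y - up (pk (ms k)) z) *
        |up (pk (ms k)) y - up (pk (ms k)) z| ^ (pk (ms k) - 2) = 0 := by
      intro k
      have hp2 : 2 ≤ pk (ms k) := hpk2 _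
      have hmin : ∀ t : ℝ, En n (pk (ms k)) (up (pk (ms k)))
          ≤ En n (pk (ms k)) (fun zz => if zz = z then up (pk (ms k)) z + t else up (pk (ms k)) zz) := by
        intro t
        apply En_le_of_Ip_le (hpk1 _)
        apply (hup _ (hpk1 _)).2
        intro zz hzz
        rw [if_neg (show zz ≠ z from fun h => hzV0 (by rw [← h]; exact hzz)), hbd _ (hpk1 _) zz hzz]
      have hel := euler_lagrange (by linarith : 1 < pk (ms k)) (up (pk (ms k))) hzVn hmin
      have hfac : ∑ y ∈ NF n z, Dp (pk (ms k)) (up (pk (ms k)) y - up (pk (ms k)) z)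
          = pk (ms k) * ∑ y ∈ NF n z, (up (pk (ms k)) y - up (pk (ms k)) z) *
            |up (pk (ms k)) y - up (pk (ms k)) z| ^ (pk (ms k) - 2) := by
        rw [Finset.mul_sum]
        exact Finset.sum_congr rfl fun y _ => by rw [Dp]; ring
      rw [hfac] at hel
      rcases mul_eq_zero.mp hel with h | h
      · linarith
      · exact h
    have he : Filter.Tendsto (fun k => pk (ms k) - 2) Filter.atTop Filter.atTop := by
      have h1 : Filter.Tendsto (fun k => pk (ms k)) Filter.atTop Filter.atTop :=
        hpkT.comp hms.tendsto_atTop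
      simpa [sub_eq_add_neg] using Filter.tendsto_atTop_add_const_right _ (-2) h1
    have hconvd : ∀ y ∈ NF n z, Filter.Tendsto
        (fun k => up (pk (ms k)) y - up (pk (ms k)) z) Filter.atTop (𝓝 (uoo y - uoo z)) :=
      fun y hy => (hptconv y (hVnVF y (adjN_mem_right (mem_NF.mp hy)))).sub
        (hptconv z (hVnVF z hzVn))
    set img := (NF n z).image (fun y => uoo y - uoo z) with himg
    have himgne : img.Nonempty := image_nonempty hzVn uoo
    set A := img.max' himgne with hA
    set B' := img.min' himgne with hB'
    have hmemimg : ∀ y ∈ NF n z, uoo y - uoo z ∈ img := fun y hy => by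
      rw [himg]; exact Finset.mem_image_of_mem _ hy
    have hAle : ∀ y ∈ NF n z, uoo y - uoo z ≤ A := fun y hy =>
      Finset.le_max' img _ (hmemimg y hy)
    have hAatt : ∃ y ∈ NF n z, uoo y - uoo z = A := by
      obtain ⟨y, hy, hval⟩ := Finset.mem_image.mp (Finset.max'_mem img himgne)
      exact ⟨y, hy, hval⟩
    have hBle : ∀ y ∈ NF n z, B' ≤ uoo y - uoo z := fun y hy =>
      Finset.min'_le img _ (hmemimg y hy)
    have hBatt : ∃ y ∈ NF n z, uoo y - uoo z = B' := by
      obtain ⟨y, hy, hval⟩ := Finset.mem_image.mp (Finset.min'_mem img himgne)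
      exact ⟨y, hy, hval⟩
    have h1 : A + B' ≤ 0 :=
      el_limit (fun y => uoo y - uoo z)
        (fun k y => up (pk (ms k)) y - up (pk (ms k)) z)
        (fun k => pk (ms k) - 2) he hconvd hEL hAle hAatt hBle
    have hEL2 : ∀ k, ∑ y ∈ NF n z, (-(up (pk (ms k)) y - up (pk (ms k)) z)) *
        |(-(up (pk (ms k)) y - up (pk (ms k)) z))| ^ (pk (ms k) - 2) = 0 := by
      intro k
      have hcongr : ∀ y ∈ NF n z, (-(up (pk (ms k)) y - up (pk (ms k)) z)) *
          |(-(up (pk (ms k)) y - up (pk (ms k)) z))| ^ (pk (ms k) - 2)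
          = -((up (pk (ms k)) y - up (pk (ms k)) z) *
            |up (pk (ms k)) y - up (pk (ms k)) z| ^ (pk (ms k) - 2)) := by
        intro y _
        rw [abs_neg]; ring
      rw [Finset.sum_congr rfl hcongr, Finset.sum_neg_distrib, hEL k, neg_zero]
    have h2 : (-B') + (-A) ≤ 0 := by
      apply el_limit (fun y => -(uoo y - uoo z))
        (fun k y => -(up (pk (ms k)) y - up (pk (ms k)) z))
        (fun k => pk (ms k) - 2) he (fun y hy => (hconvd y hy).neg) hEL2
      · intro y hy
        have := hBle y hy
        linarith
      · obtain ⟨y, hy, hval⟩ := hBatt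
        exact ⟨y, hy, by rw [hval]⟩
      · intro y hy
        have := hAle y hy
        linarith
    have hz0 : A + B' = 0 := by linarith
    rw [lapInf_eq_max_min uoo hzVn]
    exact hz0
  have hle1 := amle_le hharm hun (fun z hz => by rw [hbduoo z hz, hunb z hz])
  have hle2 := amle_le hun hharm (fun z hz => by rw [hbduoo z hz, hunb z hz])
  refine ⟨fun k => ms k + K0, ?_⟩
  have hux : uoo x = un x := le_antisymm (hle1 x hx) (hle2 x hx)
  have h := hptconv x (hVnVF x hx)
  rw [hux] at h
  exact h
end
end

section
/- Let K be a connected subset of a finite graph and suppose u satisfies the comparison with cones property on all connected subsets of K. Then Lipⁿ(u,K) = Lipⁿ(u,∂K), i.e., the Lipschitz constant of u on K∪∂K (with respect to the restricted path metric d_K) equals the Lipschitz constant of its boundary values. -/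
open Filter Topology
open scoped Classical

noncomputable section

variable {V : Type*}

-- ### path lemmas

lemma pathIn_mono {adj : V → V → Prop} {K₁ K₂ : Set V} (h : K₁ ⊆ K₂) {x y : V} {l : List V}
    (hp : pathIn adj K₁ x y l) : pathIn adj K₂ x y l :=
  ⟨hp.1, fun z hz => h (hp.2 z hz)⟩

lemma pathIn_nil {adj : V → V → Prop} {K : Set V} {x y : V} (h : adj x y) :
    pathIn adj K x y [] := by
  refine ⟨?_, by simp⟩
  exact List.isChain_pair.mpr h

lemma pathIn_cons {adj : V → V → Prop} {K : Set V} {x y v : V} {l : List V}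
    (hp : pathIn adj K x y (v :: l)) : adj x v ∧ v ∈ K ∧ pathIn adj K v y l := by
  obtain ⟨hch, hm⟩ := hp
  rw [List.cons_append, List.Chain, List.isChain_cons_cons] at hch
  exact ⟨hch.1, hm v (by simp), hch.2, fun z hz => hm z (by simp [hz])⟩

lemma pathIn_concat {adj : V → V → Prop} {K : Set V} {x y z : V} {l₁ l₂ : List V}
    (h₁ : pathIn adj K x z l₁) (h₂ : pathIn adj K z y l₂) (hz : z ∈ K) :
    pathIn adj K x y (l₁ ++ z :: l₂) := by
  constructor
  · have : (l₁ ++ z :: l₂) ++ [y] = l₁ ++ z :: (l₂ ++ [y]) := by simp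
    rw [this, List.Chain, List.isChain_cons_split]
    exact ⟨h₁.1, h₂.1⟩
  · intro w hw
    rcases List.mem_append.mp hw with hw | hw
    · exact h₁.2 w hw
    · rcases List.mem_cons.mp hw with rfl | hw
      · exact hz
      · exact h₂.2 w hw

lemma pathIn_snoc {adj : V → V → Prop} {K : Set V} {x y z : V} {l : List V}
    (h₁ : pathIn adj K x z l) (h : adj z y) (hz : z ∈ K) :
    pathIn adj K x y (l ++ [z]) :=
  pathIn_concat h₁ (pathIn_nil h) hz

lemma pathIn_reverse {adj : V → V → Prop} (hsymm : ∀ x y, adj x y → adj y x)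
    {K : Set V} {x y : V} {l : List V} (hp : pathIn adj K x y l) :
    pathIn adj K y x l.reverse := by
  refine ⟨?_, fun z hz => hp.2 z (List.mem_reverse.mp hz)⟩
  have hch : List.Chain' adj (x :: (l ++ [y])) := hp.1
  have hflip : List.Chain' (flip adj) (x :: (l ++ [y])) :=
    hch.imp (fun a b hab => hsymm a b hab)
  have := (List.isChain_reverse (R := adj)).mpr hflip
  have heq : (x :: (l ++ [y])).reverse = y :: (l.reverse ++ [x]) := by simp
  rw [heq] at this
  exact this

-- ### dK lemmas

lemma dK_set_bddBelow {adj : V → V → Prop} {K : Set V} {δ : ℝ} (hδ : 0 ≤ δ) (x y : V) :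
    BddBelow {r : ℝ | ∃ l : List V, pathIn adj K x y l ∧ r = δ * (l.length + 1)} := by
  refine ⟨0, ?_⟩
  rintro r ⟨l, _, rfl⟩
  positivity

lemma dK_self {adj : V → V → Prop} {K : Set V} (δ : ℝ) (x : V) : dK adj K δ x x = 0 :=
  if_pos rfl

lemma dK_nonneg {adj : V → V → Prop} {K : Set V} {δ : ℝ} (hδ : 0 ≤ δ) (x y : V) :
    0 ≤ dK adj K δ x y := by
  unfold dK
  split
  · exact le_refl _
  · exact Real.sInf_nonneg (by rintro r ⟨l, _, rfl⟩; positivity)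

lemma dK_le_of_path {adj : V → V → Prop} {K : Set V} {δ : ℝ} (hδ : 0 ≤ δ) {x y : V}
    (hne : x ≠ y) {l : List V} (hp : pathIn adj K x y l) :
    dK adj K δ x y ≤ δ * (l.length + 1) := by
  unfold dK
  rw [if_neg hne]
  exact csInf_le (dK_set_bddBelow hδ x y) ⟨l, hp, rfl⟩

lemma le_dK {adj : V → V → Prop} {K : Set V} {δ : ℝ} (hδ : 0 ≤ δ) {x y : V}
    (hne : x ≠ y) (hex : ∃ l, pathIn adj K x y l) : δ ≤ dK adj K δ x y := by
  unfold dK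
  rw [if_neg hne]
  obtain ⟨l, hl⟩ := hex
  refine le_csInf ⟨_, l, hl, rfl⟩ ?_
  rintro r ⟨l', _, rfl⟩
  nlinarith [l'.length.cast_nonneg (α := ℝ)]

lemma dK_pos {adj : V → V → Prop} {K : Set V} {δ : ℝ} (hδ : 0 < δ) {x y : V}
    (hne : x ≠ y) (hex : ∃ l, pathIn adj K x y l) : 0 < dK adj K δ x y :=
  lt_of_lt_of_le hδ (le_dK hδ.le hne hex)

lemma dK_symm {adj : V → V → Prop} (hsymm : ∀ x y, adj x y → adj y x) {K : Set V} (δ : ℝ)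
    (x y : V) : dK adj K δ x y = dK adj K δ y x := by
  unfold dK
  by_cases h : x = y
  · subst h; simp
  · rw [if_neg h, if_neg (Ne.symm h)]
    congr 1
    ext r
    constructor
    · rintro ⟨l, hl, rfl⟩
      exact ⟨l.reverse, pathIn_reverse hsymm hl, by simp⟩
    · rintro ⟨l, hl, rfl⟩
      exact ⟨l.reverse, pathIn_reverse hsymm hl, by simp⟩

lemma dK_mono {adj : V → V → Prop} {C K : Set V} (hsub : C ⊆ K) {δ : ℝ} (hδ : 0 ≤ δ)
    {x y : V} (hne : x ≠ y) (hex : ∃ l, pathIn adj C x y l) :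
    dK adj K δ x y ≤ dK adj C δ x y := by
  unfold dK
  rw [if_neg hne, if_neg hne]
  obtain ⟨l, hl⟩ := hex
  refine csInf_le_csInf (dK_set_bddBelow hδ x y) ⟨_, l, hl, rfl⟩ ?_
  rintro r ⟨l', hl', rfl⟩
  exact ⟨l', pathIn_mono hsub hl', rfl⟩

lemma dK_eq_zero_of_no_path {adj : V → V → Prop} {K : Set V} (δ : ℝ) {x y : V}
    (hne : x ≠ y) (hex : ¬ ∃ l, pathIn adj K x y l) : dK adj K δ x y = 0 := by
  unfold dK
  rw [if_neg hne]
  convert Real.sInf_empty using 2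
  ext r
  simp only [Set.mem_setOf_eq, Set.mem_empty_iff_false, iff_false, not_exists]
  rintro l ⟨hl, -⟩
  exact hex ⟨l, hl⟩

lemma dK_geodesic {adj : V → V → Prop} {K : Set V} {δ : ℝ} (hδ : 0 ≤ δ) {x y : V}
    (hne : x ≠ y) (hex : ∃ l, pathIn adj K x y l) :
    ∃ l, pathIn adj K x y l ∧ dK adj K δ x y = δ * (l.length + 1) := by
  have hP : ∃ n, ∃ l : List V, pathIn adj K x y l ∧ l.length = n := by
    obtain ⟨l, hl⟩ := hex; exact ⟨l.length, l, hl, rfl⟩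
  obtain ⟨l, hl, hlen⟩ := Nat.find_spec hP
  refine ⟨l, hl, ?_⟩
  unfold dK
  rw [if_neg hne]
  refine IsLeast.csInf_eq ⟨⟨l, hl, rfl⟩, ?_⟩
  rintro r ⟨l', hl', rfl⟩
  have hle : Nat.find hP ≤ l'.length := Nat.find_min' hP ⟨l', hl', rfl⟩
  have : (l.length : ℝ) ≤ l'.length := by
    have : l.length ≤ l'.length := hlen ▸ hle
    exact_mod_cast this
  nlinarith

-- ### LipOn lemmas

lemma lipOn_bddAbove [Fintype V] (adj : V → V → Prop) (K A : Set V) (δ : ℝ) (u : V → ℝ) :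
    BddAbove {r : ℝ | ∃ x ∈ A, ∃ y ∈ A, x ≠ y ∧ r = |u x - u y| / dK adj K δ x y} := by
  apply Set.Finite.bddAbove
  apply Set.Finite.subset (Set.finite_range (fun p : V × V => |u p.1 - u p.2| / dK adj K δ p.1 p.2))
  rintro r ⟨x, hx, y, hy, hne, rfl⟩
  exact ⟨(x, y), rfl⟩

lemma lipOn_nonneg {adj : V → V → Prop} {K A : Set V} {δ : ℝ} (hδ : 0 ≤ δ) (u : V → ℝ) :
    0 ≤ LipOn adj K A δ u := by
  apply Real.sSup_nonneg
  rintro r ⟨x, hx, y, hy, hne, rfl⟩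
  exact div_nonneg (abs_nonneg _) (dK_nonneg hδ x y)

lemma lipOn_bound [Fintype V] {adj : V → V → Prop} {K A : Set V} {δ : ℝ} {u : V → ℝ}
    {x y : V} (hx : x ∈ A) (hy : y ∈ A) (hne : x ≠ y) (hd : 0 < dK adj K δ x y) :
    |u x - u y| ≤ LipOn adj K A δ u * dK adj K δ x y := by
  have h := le_csSup (lipOn_bddAbove adj K A δ u) (show _ ∈ _ from ⟨x, hx, y, hy, hne, rfl⟩)
  rw [div_le_iff₀ hd] at h
  unfold LipOn
  exact h

-- ### cone estimate

lemma cone_est [Fintype V] {adj : V → V → Prop} {δ : ℝ} (hδ : 0 < δ) {K'' : Set V}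
    (hconn : connectedIn adj K'') {u : V → ℝ} {x₀ : V} (hx₀ : x₀ ∈ bdry adj K'')
    (hcc : ∀ lam : ℝ, 0 ≤ lam → ∀ α : ℝ,
      ((∀ y ∈ bdry adj K'', u y ≤ α + lam * dK adj K'' δ x₀ y) →
        ∀ x ∈ K'', u x ≤ α + lam * dK adj K'' δ x₀ x) ∧
      ((∀ y ∈ bdry adj K'', α - lam * dK adj K'' δ x₀ y ≤ u y) →
        ∀ x ∈ K'', α - lam * dK adj K'' δ x₀ x ≤ u x))
    {x : V} (hx : x ∈ K'') :
    |u x - u x₀| ≤ LipOn adj K'' (bdry adj K'') δ u * dK adj K'' δ x₀ x := by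
  set Λ := LipOn adj K'' (bdry adj K'') δ u with hΛdef
  have hΛ : 0 ≤ Λ := lipOn_nonneg hδ.le u
  obtain ⟨hup, hdown⟩ := hcc Λ hΛ (u x₀)
  have hb : ∀ y ∈ bdry adj K'', |u x₀ - u y| ≤ Λ * dK adj K'' δ x₀ y := by
    intro y hy
    by_cases hxy : x₀ = y
    · subst hxy; simp [dK_self]
    · have hpath := hconn x₀ (Or.inr hx₀) y (Or.inr hy) hxy
      exact lipOn_bound hx₀ hy hxy (dK_pos hδ hxy hpath)
  have h1 : u x ≤ u x₀ + Λ * dK adj K'' δ x₀ x := by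
    refine hup (fun y hy => ?_) x hx
    have := (abs_sub_le_iff.mp (hb y hy)).2
    linarith
  have h2 : u x₀ - Λ * dK adj K'' δ x₀ x ≤ u x := by
    refine hdown (fun y hy => ?_) x hx
    have := (abs_sub_le_iff.mp (hb y hy)).1
    linarith
  rw [abs_sub_le_iff]
  constructor <;> linarith

-- ### reachability components

def reachSet (adj : V → V → Prop) (K : Set V) (z : V) : Set V :=
  insert z {w | w ∈ K ∧ ∃ l, pathIn adj K z w l}

lemma reach_subset {adj : V → V → Prop} {K : Set V} {z : V} (hz : z ∈ K) :
    reachSet adj K z ⊆ K := by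
  rintro w (rfl | ⟨hw, -⟩)
  · exact hz
  · exact hw

lemma reach_mem {adj : V → V → Prop} {K : Set V} {z : V} : z ∈ reachSet adj K z :=
  Set.mem_insert _ _

lemma reach_adj_closed {adj : V → V → Prop} {K : Set V} {z : V} (hz : z ∈ K) {c w : V}
    (hc : c ∈ reachSet adj K z) (ha : adj c w) (hw : w ∈ K) : w ∈ reachSet adj K z := by
  rcases hc with rfl | ⟨hcK, l, hl⟩
  · exact Or.inr ⟨hw, [], pathIn_nil ha⟩
  · exact Or.inr ⟨hw, l ++ [c], pathIn_snoc hl ha hcK⟩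

lemma reach_path_all {adj : V → V → Prop} {K : Set V} {z : V} (hz : z ∈ K) :
    ∀ (l : List V) (a w : V), a ∈ reachSet adj K z → pathIn adj K a w l →
      ∀ v ∈ l, v ∈ reachSet adj K z := by
  intro l
  induction l with
  | nil => intro a w _ _ v hv; simp at hv
  | cons v t ih =>
    intro a w ha hp v' hv'
    obtain ⟨hadj, hvK, hp'⟩ := pathIn_cons hp
    have hvC : v ∈ reachSet adj K z := reach_adj_closed hz ha hadj hvK
    rcases List.mem_cons.mp hv' with rfl | hv'
    · exact hvC
    · exact ih v w hvC hp' v' hv'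

lemma reach_from {adj : V → V → Prop} {K : Set V} {z : V} (hz : z ∈ K) {p : V}
    (hp : p ∈ reachSet adj K z ∪ bdry adj (reachSet adj K z)) (hne : p ≠ z) :
    ∃ l, pathIn adj (reachSet adj K z) z p l := by
  have hC : ∀ q ∈ reachSet adj K z, q ≠ z → ∃ l, pathIn adj (reachSet adj K z) z q l := by
    rintro q (rfl | ⟨hqK, l, hl⟩) hq
    · exact absurd rfl hq
    · exact ⟨l, hl.1, reach_path_all hz l z q reach_mem hl⟩
  rcases hp with hp | ⟨hpc, c, hc, hadj⟩
  · exact hC p hp hne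
  · by_cases hcz : c = z
    · subst hcz; exact ⟨[], pathIn_nil hadj⟩
    · obtain ⟨l, hl⟩ := hC c hc hcz
      exact ⟨l ++ [c], pathIn_snoc hl hadj hc⟩

lemma reach_conn {adj : V → V → Prop} (hsymm : ∀ x y, adj x y → adj y x) {K : Set V} {z : V}
    (hz : z ∈ K) : connectedIn adj (reachSet adj K z) := by
  intro a ha b hb hne
  by_cases haz : a = z
  · subst haz; exact reach_from hz hb (Ne.symm hne)
  · by_cases hbz : b = z
    · subst hbz
      obtain ⟨l, hl⟩ := reach_from hz ha haz
      exact ⟨l.reverse, pathIn_reverse hsymm hl⟩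
    · obtain ⟨l₁, h₁⟩ := reach_from hz ha haz
      obtain ⟨l₂, h₂⟩ := reach_from hz hb hbz
      exact ⟨l₁.reverse ++ z :: l₂, pathIn_concat (pathIn_reverse hsymm h₁) h₂ reach_mem⟩

-- ### telescoping

lemma telescope {adj : V → V → Prop} {K : Set V} {u : V → ℝ} {B : ℝ}
    (Hstep : ∀ p q, adj p q → p ∈ K ∪ bdry adj K → q ∈ K ∪ bdry adj K → |u p - u q| ≤ B) :
    ∀ (l : List V) (x y : V), x ∈ K ∪ bdry adj K → y ∈ K ∪ bdry adj K →
      List.Chain adj x (l ++ [y]) → (∀ v ∈ l, v ∈ K) →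
      |u x - u y| ≤ B * (l.length + 1) := by
  intro l
  induction l with
  | nil =>
    intro x y hx hy hch _
    simp only [List.nil_append] at hch
    have := Hstep x y (List.isChain_pair.mp hch) hx hy
    simpa using this
  | cons v t ih =>
    intro x y hx hy hch hmem
    rw [List.cons_append, List.Chain, List.isChain_cons_cons] at hch
    have hvK : v ∈ K := hmem v (by simp)
    have h1 := Hstep x v hch.1 hx (Or.inl hvK)
    have h2 := ih v y (Or.inl hvK) hy hch.2 (fun w hw => hmem w (by simp [hw]))
    have htri := abs_sub_le (u x) (u v) (u y)
    have hc : ((v :: t).length : ℝ) + 1 = (t.length + 1) + 1 := by push_cast [List.length_cons]; ring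
    rw [hc, mul_add, mul_one]
    linarith


/-- Comparison with cones on all connected subsets of `K` implies that the
Lipschitz constant on `K` equals that of the boundary values. -/
theorem stmt19 [Fintype V] (adj : V → V → Prop) (hsymm : ∀ x y, adj x y → adj y x)
    (δ : ℝ) (hδ : 0 < δ) (K : Set V) (hconn : connectedIn adj K) (u : V → ℝ)
    (hCC : ∀ K' ⊆ K, connectedIn adj K' →
      ∀ x₀ ∈ bdry adj K', ∀ lam : ℝ, 0 ≤ lam → ∀ α : ℝ,
        ((∀ y ∈ bdry adj K', u y ≤ α + lam * dK adj K' δ x₀ y) →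
          ∀ x ∈ K', u x ≤ α + lam * dK adj K' δ x₀ x) ∧
        ((∀ y ∈ bdry adj K', α - lam * dK adj K' δ x₀ y ≤ u y) →
          ∀ x ∈ K', α - lam * dK adj K' δ x₀ x ≤ u x)) :
    LipOn adj K (K ∪ bdry adj K) δ u = LipOn adj K (bdry adj K) δ u := by
  set Lb := LipOn adj K (bdry adj K) δ u with hLdef
  have hLnn : 0 ≤ Lb := lipOn_nonneg hδ.le u
  -- the key adjacent-pair estimate
  have kl : ∀ x ∈ K, ∀ z, adj x z → |u x - u z| ≤ Lb * δ := by
    intro x hx z hadj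
    by_cases hzx : z = x
    · subst hzx; simp only [sub_self, abs_zero]; positivity
    by_cases hzK : z ∈ K
    · -- interior neighbour: use the component of z in K \ {x}
      set C := reachSet adj (K \ {x}) z with hCdef
      have hzK' : z ∈ K \ {x} := ⟨hzK, hzx⟩
      have hCsub' : C ⊆ K \ {x} := reach_subset hzK'
      have hCsubK : C ⊆ K := hCsub'.trans Set.diff_subset
      have hCconn : connectedIn adj C := reach_conn hsymm hzK'
      have hzC : z ∈ C := reach_mem
      have hxC : x ∉ C := fun h => (hCsub' h).2 rfl
      have hxB : x ∈ bdry adj C := ⟨hxC, z, hzC, hsymm x z hadj⟩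
      have hcc := fun lam hlam α => hCC C hCsubK hCconn x hxB lam hlam α
      set Λ := LipOn adj C (bdry adj C) δ u with hΛdef
      have hΛnn : 0 ≤ Λ := lipOn_nonneg hδ.le u
      have hcone := cone_est hδ hCconn hxB hcc hzC
      have hdCle : dK adj C δ x z ≤ δ := by
        have := dK_le_of_path (adj := adj) (K := C) hδ.le (Ne.symm hzx) (pathIn_nil hadj)
        simpa using this
      have hcone' : |u x - u z| ≤ Λ * δ := by
        rw [abs_sub_comm]
        calc |u z - u x| ≤ Λ * dK adj C δ x z := hcone
          _ ≤ Λ * δ := mul_le_mul_of_nonneg_left hdCle hΛnn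
      -- Λ ≤ Lb
      have hccK := fun lam hlam α => fun (x₀ : V) (hx₀ : x₀ ∈ bdry adj K) =>
        hCC K subset_rfl hconn x₀ hx₀ lam hlam α
      have hΛle : Λ ≤ Lb := by
        rw [hΛdef]
        apply Real.sSup_le _ hLnn
        rintro r ⟨a, ha, b, hb, hab, rfl⟩
        have hcase : ∀ w, w ∈ bdry adj C → w ∈ bdry adj K ∨ w = x := by
          rintro w ⟨hwC, c, hc, hcw⟩
          by_cases hwK : w ∈ K
          · by_cases hwx : w = x
            · exact Or.inr hwx
            · exact absurd (reach_adj_closed hzK' hc hcw ⟨hwK, hwx⟩) hwC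
          · exact Or.inl ⟨hwK, c, hCsubK hc, hcw⟩
        have key : |u a - u b| ≤ Lb * dK adj K δ a b := by
          rcases hcase a ha with haB | rfl
          · rcases hcase b hb with hbB | rfl
            · exact lipOn_bound haB hbB hab
                (dK_pos hδ hab (hconn a (Or.inr haB) b (Or.inr hbB) hab))
            · have := cone_est hδ hconn haB (fun lam hlam α =>
                hccK lam hlam α a haB) hx
              rwa [abs_sub_comm] at this
          · rcases hcase b hb with hbB | rfl
            · have := cone_est hδ hconn hbB (fun lam hlam α =>
                hccK lam hlam α b hbB) hx
              rwa [dK_symm hsymm (K := K) δ b a] at this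
            · exact absurd rfl hab
        by_cases hex : ∃ l, pathIn adj C a b l
        · have hdC : 0 < dK adj C δ a b := dK_pos hδ hab hex
          have hKC : dK adj K δ a b ≤ dK adj C δ a b := dK_mono hCsubK hδ.le hab hex
          rw [div_le_iff₀ hdC]
          calc |u a - u b| ≤ Lb * dK adj K δ a b := key
            _ ≤ Lb * dK adj C δ a b := mul_le_mul_of_nonneg_left hKC hLnn
        · rw [dK_eq_zero_of_no_path δ hab hex]
          simpa using hLnn
      calc |u x - u z| ≤ Λ * δ := hcone'
        _ ≤ Lb * δ := mul_le_mul_of_nonneg_right hΛle hδ.le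
    · -- boundary neighbour: cone estimate on K itself
      have hzB : z ∈ bdry adj K := ⟨hzK, x, hx, hadj⟩
      have hcc := fun lam hlam α => hCC K subset_rfl hconn z hzB lam hlam α
      have hcone := cone_est hδ hconn hzB hcc hx
      have hdle : dK adj K δ z x ≤ δ := by
        have := dK_le_of_path (adj := adj) (K := K) hδ.le hzx (pathIn_nil (hsymm x z hadj))
        simpa using this
      calc |u x - u z| ≤ Lb * dK adj K δ z x := hcone
        _ ≤ Lb * δ := mul_le_mul_of_nonneg_left hdle hLnn
  -- every adjacent pair in K ∪ ∂K has slope at most Lb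
  have Hstep : ∀ p q, adj p q → p ∈ K ∪ bdry adj K → q ∈ K ∪ bdry adj K →
      |u p - u q| ≤ Lb * δ := by
    intro p q hadj hp hq
    rcases hp with hpK | hpB
    · exact kl p hpK q hadj
    rcases hq with hqK | hqB
    · rw [abs_sub_comm]; exact kl q hqK p (hsymm p q hadj)
    · by_cases hpq : p = q
      · subst hpq; simp only [sub_self, abs_zero]; positivity
      · have hd0 : 0 < dK adj K δ p q := dK_pos hδ hpq ⟨[], pathIn_nil hadj⟩
        have hdle : dK adj K δ p q ≤ δ := by
          have := dK_le_of_path (adj := adj) (K := K) hδ.le hpq (pathIn_nil hadj)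
          simpa using this
        calc |u p - u q| ≤ Lb * dK adj K δ p q := lipOn_bound hpB hqB hpq hd0
          _ ≤ Lb * δ := mul_le_mul_of_nonneg_left hdle hLnn
  apply le_antisymm
  · apply Real.sSup_le _ hLnn
    rintro r ⟨a, ha, b, hb, hab, rfl⟩
    obtain ⟨l, hl, heq⟩ := dK_geodesic hδ.le hab (hconn a ha b hb hab)
    have hlen : |u a - u b| ≤ (Lb * δ) * (l.length + 1) :=
      telescope Hstep l a b ha hb hl.1 hl.2
    have hd0 : 0 < dK adj K δ a b := dK_pos hδ hab ⟨l, hl⟩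
    rw [div_le_iff₀ hd0, heq]
    calc |u a - u b| ≤ (Lb * δ) * (l.length + 1) := hlen
      _ = Lb * (δ * (l.length + 1)) := by ring
  · apply Real.sSup_le _ (lipOn_nonneg hδ.le u)
    rintro r ⟨a, ha, b, hb, hab, rfl⟩
    exact le_csSup (lipOn_bddAbove adj K (K ∪ bdry adj K) δ u)
      ⟨a, Or.inr ha, b, Or.inr hb, hab, rfl⟩

end
end
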